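/- Let p ≥ 1, N ≥ 2, K ≥ 1, let b > 0, γ ∈ (0,1), D ≥ 0. For each round k = 1,…,K, let rewards d^k_1,…,d^k_p satisfy 0 ≤ d^k_j ≤ D, let advice vectors e^{k,n} ∈ ℝ^p have nonnegative entries with Σ_{j=1}^p e^{k,n}_j = b for each expert n, and let I_k ⊆ {1,…,p}. Define the Exp4 recursion: w_{1,n} = 1, W_k = Σ_{n=1}^N w_{k,n}, q_{k,n} = w_{k,n}/W_k, π^k_j = (1−γ) Σ_{n=1}^N q_{k,n} e^{k,n}_j + γb/p, d̂^k_j = (d^k_j/π^k_j) if j ∈ I_k and 0 otherwise, y_{k,n} = Σ_{j=1}^p e^{k,n}_j d̂^k_j, and w_{k+1,n} = w_{k,n}·exp(γ y_{k,n}/p). Assume γ y_{k,n}/p ≤ 1 for all k and n. Then for every expert n ∈ {1,…,N}: Σ_{k=1}^K Σ_{j∈I_k} d^k_j ≥ (1−γ)·Σ_{k=1}^K y_{k,n} − ((e−2)bDγ/p)·Σ_{k=1}^K Σ_{j∈I_k} d̂^k_j − p(1−γ)(ln N)/γ. -/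

import Mathlib

lemma real_exp_tsum (x : ℝ) : Real.exp x = ∑' n : ℕ, x ^ n / n.factorial := by
  rw [Real.exp_eq_exp_ℝ, NormedSpace.exp_eq_tsum_div]

lemma exp_quad {x : ℝ} (hx : x ≤ 1) :
    Real.exp x ≤ 1 + x + (Real.exp 1 - 2) * x ^ 2 := by
  rcases le_or_gt x (-1) with h | h
  · have h1 : Real.exp x ≤ Real.exp (-1) := Real.exp_le_exp.mpr h
    have h2 : Real.exp (-1) = (Real.exp 1)⁻¹ := by rw [Real.exp_neg]
    have he : (2.7182818283 : ℝ) < Real.exp 1 := Real.exp_one_gt_d9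
    have hepos : (0:ℝ) < Real.exp 1 := Real.exp_pos 1
    have hinv : (Real.exp 1)⁻¹ * Real.exp 1 = 1 := inv_mul_cancel₀ (ne_of_gt hepos)
    have h3 : (Real.exp 1)⁻¹ ≤ Real.exp 1 - 2 := by nlinarith
    have ha : (0:ℝ) ≤ -(x+1) := by linarith
    have hb : (0:ℝ) ≤ -((Real.exp 1 - 2)*(x-1)+1) := by nlinarith
    have h4 : Real.exp 1 - 2 ≤ 1 + x + (Real.exp 1 - 2) * x ^ 2 := by nlinarith [mul_nonneg ha hb]
    linarith [h1, h2 ▸ h1]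
  · have hax : |x| ≤ 1 := abs_le.mpr ⟨le_of_lt h, hx⟩
    have hs : ∀ z : ℝ, Summable (fun n : ℕ => z ^ (n + 2) / (n + 2).factorial) := by
      intro z
      exact (summable_nat_add_iff 2).2 (Real.summable_pow_div_factorial z)
    have key : ∀ z : ℝ, Real.exp z = 1 + z + ∑' n : ℕ, z ^ (n + 2) / (n + 2).factorial := by
      intro z
      have := Summable.sum_add_tsum_nat_add 2 (Real.summable_pow_div_factorial z)
      rw [real_exp_tsum z, ← this]
      simp [Finset.sum_range_succ]
    have h1 := key x
    have h2 := key 1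
    have hcmp : ∑' n : ℕ, x ^ (n + 2) / (n + 2).factorial
        ≤ ∑' n : ℕ, x ^ 2 * (1 ^ (n + 2) / (n + 2).factorial) := by
      apply Summable.tsum_le_tsum _ (hs x) ((hs 1).mul_left _)
      intro n
      have h3 : x ^ (n + 2) ≤ x ^ 2 := by
        calc x ^ (n + 2) ≤ |x ^ (n + 2)| := le_abs_self _
          _ = |x| ^ (n + 2) := by rw [abs_pow]
          _ ≤ |x| ^ 2 := pow_le_pow_of_le_one (abs_nonneg x) hax (by omega)
          _ = x ^ 2 := sq_abs x
      have hf : (0:ℝ) < (n + 2).factorial := by positivity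
      rw [one_pow, mul_one_div]
      gcongr
    rw [tsum_mul_left] at hcmp
    have hone : ∑' n : ℕ, (1:ℝ) ^ (n + 2) / (n + 2).factorial = Real.exp 1 - 2 := by
      have := key 1
      linarith
    rw [hone] at hcmp
    linarith [h1, hcmp]

theorem exp4_sample_path_inequality (p N K : ℕ) (hp : 1 ≤ p) (hN : 2 ≤ N) (hK : 1 ≤ K)
    (b γ D : ℝ) (hb : 0 < b) (hγ : γ ∈ Set.Ioo (0 : ℝ) 1) (hD : 0 ≤ D)
    (d : Fin K → Fin p → ℝ) (hd : ∀ k j, 0 ≤ d k j ∧ d k j ≤ D)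
    (e : Fin K → Fin N → Fin p → ℝ)
    (he0 : ∀ k n j, 0 ≤ e k n j) (hesum : ∀ k n, ∑ j, e k n j = b)
    (I : Fin K → Finset (Fin p))
    (w : ℕ → Fin N → ℝ) (hw0 : ∀ n, w 0 n = 1)
    (W : ℕ → ℝ) (hW : ∀ k, W k = ∑ n, w k n)
    (q : Fin K → Fin N → ℝ) (hq : ∀ k n, q k n = w k n / W k)
    (π : Fin K → Fin p → ℝ)
    (hπ : ∀ k j, π k j = (1 - γ) * (∑ n, q k n * e k n j) + γ * b / p)
    (dhat : Fin K → Fin p → ℝ)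
    (hdhat : ∀ k j, dhat k j = if j ∈ I k then d k j / π k j else 0)
    (y : Fin K → Fin N → ℝ)
    (hy : ∀ k n, y k n = ∑ j, e k n j * dhat k j)
    (hwrec : ∀ (k : Fin K) (n : Fin N), w ((k : ℕ) + 1) n = w k n * Real.exp (γ * y k n / p))
    (hbound : ∀ k n, γ * y k n / p ≤ 1) :
    ∀ n : Fin N,
      ∑ k, ∑ j ∈ I k, d k j ≥
        (1 - γ) * (∑ k, y k n)
          - ((Real.exp 1 - 2) * b * D * γ / p) * ∑ k, ∑ j ∈ I k, dhat k j
          - p * (1 - γ) * Real.log N / γ := by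
  intro n₀
  obtain ⟨hγ0, hγ1⟩ := hγ
  have hp' : (0:ℝ) < p := by exact_mod_cast hp
  have h1γ : (0:ℝ) < 1 - γ := by linarith
  have hc : (0:ℝ) ≤ Real.exp 1 - 2 := by
    have := Real.exp_one_gt_d9; linarith
  -- positivity of weights
  have hwpos : ∀ m : ℕ, m ≤ K → ∀ n, 0 < w m n := by
    intro m
    induction m with
    | zero => intro _ n; rw [hw0]; norm_num
    | succ m ih =>
      intro hm n
      have hm' : m < K := by omega
      have h1 : w (m + 1) n = w m n * Real.exp (γ * y ⟨m, hm'⟩ n / p) := hwrec ⟨m, hm'⟩ n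
      rw [h1]
      exact mul_pos (ih (by omega) n) (Real.exp_pos _)
  have hWpos : ∀ m : ℕ, m ≤ K → 0 < W m := by
    intro m hm
    rw [hW]
    exact Finset.sum_pos (fun n _ => hwpos m hm n) ⟨n₀, Finset.mem_univ _⟩
  have hq0 : ∀ (k : Fin K) (n : Fin N), 0 ≤ q k n := by
    intro k n
    rw [hq]
    exact le_of_lt (div_pos (hwpos k (le_of_lt k.isLt) n) (hWpos k (le_of_lt k.isLt)))
  have hqsum : ∀ k : Fin K, ∑ n, q k n = 1 := by
    intro k
    simp only [hq]
    rw [← Finset.sum_div, ← hW, div_self (ne_of_gt (hWpos k (le_of_lt k.isLt)))]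
  have hπpos : ∀ (k : Fin K) (j : Fin p), 0 < π k j := by
    intro k j
    rw [hπ]
    have h1 : 0 ≤ ∑ n, q k n * e k n j :=
      Finset.sum_nonneg fun n _ => mul_nonneg (hq0 k n) (he0 k n j)
    have h2 : 0 < γ * b / p := by positivity
    nlinarith
  have hdhat0 : ∀ (k : Fin K) (j : Fin p), 0 ≤ dhat k j := by
    intro k j
    rw [hdhat]
    split
    · exact div_nonneg (hd k j).1 (le_of_lt (hπpos k j))
    · exact le_refl 0
  have hy0 : ∀ (k : Fin K) (n : Fin N), 0 ≤ y k n := by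
    intro k n
    rw [hy]
    exact Finset.sum_nonneg fun j _ => mul_nonneg (he0 k n j) (hdhat0 k j)
  have hπd_eq : ∀ k : Fin K, ∑ j, π k j * dhat k j = ∑ j ∈ I k, d k j := by
    intro k
    have h1 : ∀ j, π k j * dhat k j = if j ∈ I k then d k j else 0 := by
      intro j
      rw [hdhat]
      split
      · rw [mul_comm, div_mul_cancel₀ _ (ne_of_gt (hπpos k j))]
      · ring
    simp only [h1]
    rw [Finset.sum_ite_mem, Finset.univ_inter]
  have hπd_le : ∀ (k : Fin K) (j : Fin p), π k j * dhat k j ≤ D := by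
    intro k j
    rw [hdhat]
    split
    · rw [mul_comm, div_mul_cancel₀ _ (ne_of_gt (hπpos k j))]
      exact (hd k j).2
    · simpa using hD
  have hdhat_sum : ∀ k : Fin K, ∑ j, dhat k j = ∑ j ∈ I k, dhat k j := by
    intro k
    symm
    apply Finset.sum_subset (Finset.subset_univ _)
    intro j _ hj
    rw [hdhat]
    simp [hj]
  have hkey : ∀ (k : Fin K) (j : Fin p),
      (1 - γ) * (∑ n, q k n * e k n j) = π k j - γ * b / p := by
    intro k j
    rw [hπ]
    ring
  have hswap : ∀ (k : Fin K) (f : Fin p → ℝ),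
      ∑ n, q k n * ∑ j, e k n j * f j = ∑ j, (∑ n, q k n * e k n j) * f j := by
    intro k f
    simp only [Finset.mul_sum, Finset.sum_mul]
    rw [Finset.sum_comm]
    exact Finset.sum_congr rfl fun j _ => Finset.sum_congr rfl fun m _ => by ring
  -- per-round first moment bound
  have hS1 : ∀ k : Fin K, (1 - γ) * ∑ n, q k n * y k n ≤ ∑ j ∈ I k, d k j := by
    intro k
    have h1 : ∑ n, q k n * y k n = ∑ j, (∑ n, q k n * e k n j) * dhat k j := by
      simp only [hy]
      exact hswap k _
    rw [h1, Finset.mul_sum, ← hπd_eq k]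
    apply Finset.sum_le_sum
    intro j _
    have h2 := hkey k j
    have h3 : (0:ℝ) ≤ γ * b / p := by positivity
    have h4 := hdhat0 k j
    calc (1-γ) * ((∑ n, q k n * e k n j) * dhat k j)
        = ((1-γ) * (∑ n, q k n * e k n j)) * dhat k j := by ring
      _ = (π k j - γ*b/p) * dhat k j := by rw [h2]
      _ ≤ π k j * dhat k j := by nlinarith [mul_nonneg h3 h4]
  -- per-round second moment bound
  have hS2 : ∀ k : Fin K, (1 - γ) * ∑ n, q k n * (y k n)^2 ≤ b * D * ∑ j ∈ I k, dhat k j := by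
    intro k
    have hCS : ∀ n, (y k n)^2 ≤ b * ∑ j, e k n j * (dhat k j)^2 := by
      intro n
      rw [hy, ← hesum k n]
      exact Finset.sum_sq_le_sum_mul_sum_of_sq_eq_mul Finset.univ
        (fun j _ => he0 k n j) (fun j _ => mul_nonneg (he0 k n j) (sq_nonneg _))
        (fun j _ => by ring)
    have step1 : ∑ n, q k n * (y k n)^2 ≤ ∑ n, q k n * (b * ∑ j, e k n j * (dhat k j)^2) :=
      Finset.sum_le_sum fun n _ => mul_le_mul_of_nonneg_left (hCS n) (hq0 k n)
    have step2 : ∑ n, q k n * (b * ∑ j, e k n j * (dhat k j)^2)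
        = b * ∑ j, (∑ n, q k n * e k n j) * (dhat k j)^2 := by
      have h1 : ∀ n : Fin N, q k n * (b * ∑ j, e k n j * (dhat k j)^2)
          = b * (q k n * ∑ j, e k n j * (dhat k j)^2) := fun n => by ring
      simp only [h1]
      rw [← Finset.mul_sum, hswap k (fun j => (dhat k j)^2)]
    have hterm : ∀ j, ((1-γ)*(∑ n, q k n * e k n j)) * (dhat k j)^2 ≤ D * dhat k j := by
      intro j
      rw [hkey k j]
      have h4 := hdhat0 k j
      have h5 := hπd_le k j
      have h3 : (0:ℝ) ≤ γ*b/p := by positivity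
      nlinarith [mul_nonneg (mul_nonneg h3 h4) h4, mul_le_mul_of_nonneg_right h5 h4]
    calc (1-γ) * ∑ n, q k n * (y k n)^2
        ≤ (1-γ) * ∑ n, q k n * (b * ∑ j, e k n j * (dhat k j)^2) :=
          mul_le_mul_of_nonneg_left step1 (le_of_lt h1γ)
      _ = b * ∑ j, ((1-γ)*(∑ n, q k n * e k n j)) * (dhat k j)^2 := by
          rw [step2, Finset.mul_sum, Finset.mul_sum, Finset.mul_sum]
          exact Finset.sum_congr rfl fun j _ => by ring
      _ ≤ b * ∑ j, D * dhat k j :=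
          mul_le_mul_of_nonneg_left (Finset.sum_le_sum fun j _ => hterm j) (le_of_lt hb)
      _ = b * D * ∑ j, dhat k j := by rw [Finset.mul_sum, Finset.mul_sum]; exact Finset.sum_congr rfl fun j _ => by ring
      _ = b * D * ∑ j ∈ I k, dhat k j := by rw [hdhat_sum k]
  -- the per-round increment
  set c := Real.exp 1 - 2 with hcdef
  set X : Fin K → ℝ := fun k =>
    γ/p * ∑ n, q k n * y k n + c * (γ/p)^2 * ∑ n, q k n * (y k n)^2 with hXdef
  have hX0 : ∀ k, 0 ≤ X k := by
    intro k
    have h1 : 0 ≤ ∑ n, q k n * y k n :=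
      Finset.sum_nonneg fun n _ => mul_nonneg (hq0 k n) (hy0 k n)
    have h2 : 0 ≤ ∑ n, q k n * (y k n)^2 :=
      Finset.sum_nonneg fun n _ => mul_nonneg (hq0 k n) (sq_nonneg _)
    have h3 : (0:ℝ) ≤ γ/p := by positivity
    exact add_nonneg (mul_nonneg h3 h1) (mul_nonneg (mul_nonneg hc (sq_nonneg _)) h2)
  have hWrec : ∀ (m : ℕ) (hm : m < K), W (m+1) ≤ W m * (1 + X ⟨m, hm⟩) := by
    intro m hm
    set k : Fin K := ⟨m, hm⟩ with hk
    have hWk := hWpos m (le_of_lt hm)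
    have hwq : ∀ n, w m n = W m * q k n := by
      intro n
      rw [hq]
      field_simp
      exact (mul_div_cancel_left₀ _ (ne_of_gt hWk)).symm
    calc W (m+1) = ∑ n, w m n * Real.exp (γ * y k n / p) := by
          rw [hW]
          exact Finset.sum_congr rfl fun n _ => hwrec k n
      _ ≤ ∑ n, w m n * (1 + γ*y k n/p + c*(γ*y k n/p)^2) := by
          apply Finset.sum_le_sum
          intro n _
          exact mul_le_mul_of_nonneg_left (exp_quad (hbound k n))
            (le_of_lt (hwpos m (le_of_lt hm) n))
      _ = W m * (1 + X k) := by
          simp only [hwq]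
          have expand : ∀ n : Fin N, W m * q k n * (1 + γ*y k n/p + c*(γ*y k n/p)^2)
              = W m * q k n + (W m*(γ/p)) * (q k n * y k n)
                + (W m*c*(γ/p)^2) * (q k n * (y k n)^2) := by
            intro n
            field_simp
          simp only [expand]
          rw [Finset.sum_add_distrib, Finset.sum_add_distrib, ← Finset.mul_sum,
            ← Finset.mul_sum, ← Finset.mul_sum, hqsum k]
          simp only [hXdef]
          ring
  classical
  set Xn : ℕ → ℝ := fun m => if h : m < K then X ⟨m, h⟩ else 0 with hXndef
  have hlogW : ∀ m : ℕ, m ≤ K →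
      Real.log (W m) ≤ Real.log (W 0) + ∑ i ∈ Finset.range m, Xn i := by
    intro m
    induction m with
    | zero => intro _; simp
    | succ m ih =>
      intro hm
      have hm' : m < K := by omega
      have h1 := hWrec m hm'
      have hX := hX0 ⟨m, hm'⟩
      have hWm := hWpos m (by omega)
      have hWm1 := hWpos (m+1) hm
      have h2 : Real.log (W (m+1)) ≤ Real.log (W m) + X ⟨m, hm'⟩ := by
        calc Real.log (W (m+1)) ≤ Real.log (W m * (1 + X ⟨m,hm'⟩)) :=
              Real.log_le_log hWm1 h1
          _ = Real.log (W m) + Real.log (1 + X ⟨m,hm'⟩) :=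
              Real.log_mul (ne_of_gt hWm) (by linarith)
          _ ≤ Real.log (W m) + X ⟨m,hm'⟩ := by
              have := Real.log_le_sub_one_of_pos (show (0:ℝ) < 1 + X ⟨m,hm'⟩ by linarith)
              linarith
      rw [Finset.sum_range_succ]
      have hXn : Xn m = X ⟨m, hm'⟩ := by simp only [hXndef]; rw [dif_pos hm']
      linarith [ih (by omega)]
  set Yn : ℕ → ℝ := fun m => if h : m < K then γ * y ⟨m, h⟩ n₀ / p else 0 with hYndef
  have hlogw : ∀ m : ℕ, m ≤ K →
      Real.log (w m n₀) = ∑ i ∈ Finset.range m, Yn i := by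
    intro m
    induction m with
    | zero => intro _; simp [hw0]
    | succ m ih =>
      intro hm
      have hm' : m < K := by omega
      have h1 : w (m + 1) n₀ = w m n₀ * Real.exp (γ * y ⟨m, hm'⟩ n₀ / p) := hwrec ⟨m, hm'⟩ n₀
      rw [h1, Real.log_mul (ne_of_gt (hwpos m (by omega) n₀)) (ne_of_gt (Real.exp_pos _)),
        Real.log_exp, Finset.sum_range_succ, ih (by omega)]
      have hYn : Yn m = γ * y ⟨m, hm'⟩ n₀ / p := by simp only [hYndef]; rw [dif_pos hm']
      rw [hYn]
  have hwleW : w K n₀ ≤ W K := by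
    rw [hW]
    exact Finset.single_le_sum (fun i _ => le_of_lt (hwpos K le_rfl i)) (Finset.mem_univ n₀)
  have hmaster : γ/p * ∑ k, y k n₀ ≤ Real.log N + ∑ k : Fin K, X k := by
    have h1 : Real.log (w K n₀) ≤ Real.log (W K) := Real.log_le_log (hwpos K le_rfl n₀) hwleW
    have h2 := hlogW K le_rfl
    have h3 := hlogw K le_rfl
    have h4 : Real.log (W 0) = Real.log N := by
      rw [hW]
      simp [hw0]
    have h5 : ∑ i ∈ Finset.range K, Yn i = γ/p * ∑ k : Fin K, y k n₀ := by
      rw [← Fin.sum_univ_eq_sum_range Yn K, Finset.mul_sum]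
      apply Finset.sum_congr rfl
      intro i _
      simp only [hYndef]
      rw [dif_pos i.isLt, Fin.eta]
      ring
    have h6 : ∑ i ∈ Finset.range K, Xn i = ∑ k : Fin K, X k := by
      rw [← Fin.sum_univ_eq_sum_range Xn K]
      apply Finset.sum_congr rfl
      intro i _
      simp only [hXndef]
      rw [dif_pos i.isLt, Fin.eta]
    rw [← h5, ← h6, ← h4, ← h3]
    linarith
  have hXsum : (1-γ) * ∑ k : Fin K, X k
      ≤ γ/p * (∑ k, ∑ j ∈ I k, d k j) + c*(γ/p)^2 * (b*D* ∑ k, ∑ j ∈ I k, dhat k j) := by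
    have heq : ∑ k : Fin K, (γ/p * ∑ j ∈ I k, d k j + c*(γ/p)^2 * (b*D* ∑ j ∈ I k, dhat k j))
        = γ/p * (∑ k, ∑ j ∈ I k, d k j) + c*(γ/p)^2 * (b*D* ∑ k, ∑ j ∈ I k, dhat k j) := by
      rw [Finset.sum_add_distrib, ← Finset.mul_sum, ← Finset.mul_sum, ← Finset.mul_sum]
    rw [← heq, Finset.mul_sum]
    apply Finset.sum_le_sum
    intro k _
    have h1 := hS1 k
    have h2 := hS2 k
    simp only [hXdef]
    have hgp : (0:ℝ) ≤ γ/p := by positivity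
    have hgp2 : (0:ℝ) ≤ c*(γ/p)^2 := mul_nonneg hc (sq_nonneg _)
    nlinarith [mul_le_mul_of_nonneg_left h1 hgp, mul_le_mul_of_nonneg_left h2 hgp2]
  set A := ∑ k, ∑ j ∈ I k, d k j with hA
  set B := ∑ k, ∑ j ∈ I k, dhat k j with hB
  set Y := ∑ k, y k n₀ with hY
  have hmaster2 : (1-γ)*(γ/p*Y) ≤ (1-γ)*Real.log N + (γ/p*A + c*(γ/p)^2*(b*D*B)) := by
    have h7 := mul_le_mul_of_nonneg_left hmaster (le_of_lt h1γ)
    rw [mul_add] at h7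
    linarith [hXsum]
  rw [ge_iff_le]
  have hγp : (0:ℝ) < γ/p := by positivity
  rw [← mul_le_mul_iff_right₀ hγp]
  have hcancel : γ/p * ((p:ℝ) * (1-γ) * Real.log N / γ) = (1-γ)*Real.log N := by
    field_simp
  calc γ/p * ((1-γ)*Y - c*b*D*γ/p*B - (p:ℝ)*(1-γ)*Real.log N/γ)
      = (1-γ)*(γ/p*Y) - c*(γ/p)^2*(b*D*B) - (1-γ)*Real.log N := by
        rw [mul_sub, mul_sub, hcancel]
        ring
    _ ≤ γ/p * A := by linarith [hmaster2]
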